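/- Define v : ℝ → ℝ by v(x) := exp(−x²/2)·π^(−1/2)·∫₀^∞ exp(−t² − 2xt)·t^(−1/2) dt. Then v(0) = √π/(√2·Γ(3/4)) and v′(0) = −√(2π)/Γ(1/4), where Γ is the real Gamma function. -/

import Mathlib

open Set Real MeasureTheory

private lemma gauss_int (s : ℝ) (hs : -1 < s) :
    ∫ t in Set.Ioi (0:ℝ), Real.exp (-t^2) * t ^ s = (1/2) * Real.Gamma ((s+1)/2) := by
  rw [show (∫ t in Ioi (0:ℝ), Real.exp (-t^2) * t ^ s)
      = ∫ t in Ioi (0:ℝ), t ^ s * Real.exp (-t^(2:ℝ)) by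
    simp_rw [Real.rpow_two, mul_comm]]
  exact integral_rpow_mul_exp_neg_rpow two_pos hs

/-- `v(x) = e^(−x²/2) · H_{−1/2}(x)` via the integral representation
`H_{−1/2}(x) = π^(−1/2) ∫₀^∞ e^(−t² − 2xt) t^(−1/2) dt`. -/
noncomputable def vFun (x : ℝ) : ℝ :=
  Real.exp (-x ^ 2 / 2) * π ^ (-(1 / 2) : ℝ) *
    ∫ t in Set.Ioi (0 : ℝ), Real.exp (-t ^ 2 - 2 * x * t) * t ^ (-(1 / 2) : ℝ)

/-- `v(0) = √π / (√2 Γ(3/4))` and `v′(0) = −√(2π) / Γ(1/4)`. -/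
theorem stmt11 :
    vFun 0 = Real.sqrt π / (Real.sqrt 2 * Real.Gamma (3 / 4)) ∧
    deriv vFun 0 = -Real.sqrt (2 * π) / Real.Gamma (1 / 4) := by
  have hG14 : 0 < Real.Gamma (1/4) := Real.Gamma_pos_of_pos (by norm_num)
  have hG34 : 0 < Real.Gamma (3/4) := Real.Gamma_pos_of_pos (by norm_num)
  have h2 : Real.sqrt 2 * Real.sqrt 2 = 2 := Real.mul_self_sqrt (by norm_num)
  have hπ : Real.sqrt π * Real.sqrt π = π := Real.mul_self_sqrt pi_pos.le
  have hsπ : 0 < Real.sqrt π := Real.sqrt_pos.mpr pi_pos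
  have hprod : Real.Gamma (1/4) * Real.Gamma (3/4) = Real.sqrt 2 * π := by
    have h := Real.Gamma_mul_Gamma_one_sub (1/4)
    rw [show (1:ℝ) - 1/4 = 3/4 by norm_num, show π * (1/4) = π/4 by ring,
      Real.sin_pi_div_four] at h
    rw [h, div_eq_iff (by positivity)]
    linear_combination (-π/2) * h2
  have hrpow : (π : ℝ) ^ (-(1/2) : ℝ) = (Real.sqrt π)⁻¹ := by
    rw [Real.rpow_neg pi_pos.le, ← Real.sqrt_eq_rpow]
  have hI0 : (∫ t in Ioi (0:ℝ), Real.exp (-t^2 - 2*(0:ℝ)*t) * t ^ (-(1/2):ℝ))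
      = (1/2) * Real.Gamma (1/4) := by
    rw [show (∫ t in Ioi (0:ℝ), Real.exp (-t^2 - 2*(0:ℝ)*t) * t ^ (-(1/2):ℝ))
        = ∫ t in Ioi (0:ℝ), Real.exp (-t^2) * t ^ (-(1/2):ℝ) by norm_num]
    rw [gauss_int _ (by norm_num)]
    norm_num
  -- part 1
  have part1 : vFun 0 = Real.sqrt π / (Real.sqrt 2 * Real.Gamma (3 / 4)) := by
    simp only [vFun]
    rw [hI0, hrpow]
    rw [show -(0:ℝ)^2/2 = 0 by norm_num, Real.exp_zero, one_mul,
      inv_mul_eq_div, div_eq_div_iff hsπ.ne' (by positivity)]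
    rw [hπ]
    linear_combination (Real.sqrt 2/2) * hprod + (π/2) * h2
  refine ⟨part1, ?_⟩
  -- derivative under the integral
  set F : ℝ → ℝ → ℝ := fun x t => Real.exp (-t^2 - 2*x*t) * t ^ (-(1/2):ℝ) with hFdef
  set F' : ℝ → ℝ → ℝ :=
    fun x t => (-(2*t)) * (Real.exp (-t^2 - 2*x*t) * t ^ (-(1/2):ℝ)) with hF'def
  have hcont : ∀ x : ℝ, ContinuousOn (fun t => t ^ (-(1/2):ℝ)) (Ioi (0:ℝ)) :=
    fun x => continuousOn_id.rpow_const fun t ht => Or.inl (ne_of_gt ht)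
  have hmeas : ∀ x : ℝ, AEStronglyMeasurable (F x) (volume.restrict (Ioi 0)) := by
    intro x
    exact (((Continuous.continuousOn (by continuity)).mul (hcont x)).aestronglyMeasurable
      measurableSet_Ioi)
  have hmeas' : AEStronglyMeasurable (F' 0) (volume.restrict (Ioi 0)) := by
    exact (((Continuous.continuousOn (by continuity)).mul
      ((Continuous.continuousOn (by continuity)).mul (hcont 0))).aestronglyMeasurable
      measurableSet_Ioi)
  have hFint : Integrable (F 0) (volume.restrict (Ioi 0)) := by
    have hbase : IntegrableOn (fun t : ℝ => t ^ (-(1/2):ℝ) * Real.exp (-1 * t^2)) (Ioi 0) :=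
      integrableOn_rpow_mul_exp_neg_mul_sq one_pos (by norm_num)
    refine (hbase.congr_fun (fun t ht => ?_) measurableSet_Ioi)
    simp [hFdef, mul_comm]
  -- the dominating function
  set bound : ℝ → ℝ :=
    fun t => 2 * Real.exp (1/2) * (t ^ ((1/2):ℝ) * Real.exp (-(1/2) * t^2)) with hbdef
  have hbound_int : Integrable bound (volume.restrict (Ioi 0)) := by
    exact (integrableOn_rpow_mul_exp_neg_mul_sq (by norm_num : (0:ℝ) < 1/2)
      (by norm_num : (-1:ℝ) < 1/2)).const_mul _
  have h_bound : ∀ᵐ t ∂(volume.restrict (Ioi (0:ℝ))),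
      ∀ x ∈ Metric.ball (0:ℝ) (1/2), ‖F' x t‖ ≤ bound t := by
    filter_upwards [self_mem_ae_restrict measurableSet_Ioi] with t ht x hx
    rw [Metric.mem_ball, Real.dist_eq, sub_zero] at hx
    have ht : (0:ℝ) < t := ht
    have hxlt := abs_lt.mp hx
    have htt : t * t ^ (-(1/2):ℝ) = t ^ ((1/2):ℝ) := by
      nth_rewrite 1 [← Real.rpow_one t]
      rw [← Real.rpow_add ht]
      norm_num
    have htp : (0:ℝ) ≤ t ^ (-(1/2):ℝ) := Real.rpow_nonneg ht.le _
    have hexp : Real.exp (-t^2 - 2*x*t) ≤ Real.exp (1/2) * Real.exp (-(1/2) * t^2) := by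
      rw [← Real.exp_add]
      apply Real.exp_le_exp.mpr
      nlinarith [hxlt.1, hxlt.2, sq_nonneg (t - 1)]
    have : ‖F' x t‖ = 2 * (t * t ^ (-(1/2):ℝ)) * Real.exp (-t^2 - 2*x*t) := by
      show ‖(-(2*t)) * (Real.exp (-t^2 - 2*x*t) * t ^ (-(1/2):ℝ))‖ = _
      rw [Real.norm_eq_abs, abs_mul, abs_neg, abs_mul, abs_mul, abs_two, abs_of_pos ht,
        abs_of_nonneg htp, abs_of_pos (Real.exp_pos _)]
      ring
    rw [this, hbdef, htt]
    have hb : 0 ≤ 2 * t ^ ((1/2):ℝ) := by positivity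
    calc 2 * t ^ ((1/2):ℝ) * Real.exp (-t^2 - 2*x*t)
        ≤ 2 * t ^ ((1/2):ℝ) * (Real.exp (1/2) * Real.exp (-(1/2) * t^2)) :=
          mul_le_mul_of_nonneg_left hexp hb
      _ = 2 * Real.exp (1/2) * (t ^ ((1/2):ℝ) * Real.exp (-(1/2) * t^2)) := by ring
  have h_diff : ∀ᵐ t ∂(volume.restrict (Ioi (0:ℝ))),
      ∀ x ∈ Metric.ball (0:ℝ) (1/2), HasDerivAt (fun x => F x t) (F' x t) x := by
    filter_upwards [self_mem_ae_restrict measurableSet_Ioi] with t ht x hx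
    have h1 : HasDerivAt (fun x : ℝ => -t^2 - 2*x*t) (-(2*t)) x := by
      simpa using (hasDerivAt_const x (-t^2)).fun_sub
        (((hasDerivAt_id x).const_mul 2).mul_const t)
    have h2' := (h1.exp).mul_const (t ^ (-(1/2):ℝ))
    convert h2' using 1
    · rfl
    · rfl
    simp only [hF'def]
    ring
  obtain ⟨-, hderiv⟩ := hasDerivAt_integral_of_dominated_loc_of_deriv_le
    (F := F) (F' := F') (x₀ := (0:ℝ)) (bound := bound) (Metric.ball_mem_nhds _ (by norm_num : (0:ℝ) < 1/2))
    (Filter.Eventually.of_forall hmeas) hFint hmeas' h_bound hbound_int h_diff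
  have hI' : (∫ t in Ioi (0:ℝ), F' 0 t) = -Real.Gamma (3/4) := by
    rw [show (∫ t in Ioi (0:ℝ), F' 0 t)
        = ∫ t in Ioi (0:ℝ), (-2) * (Real.exp (-t^2) * t ^ ((1/2):ℝ)) from
      setIntegral_congr_fun measurableSet_Ioi (fun t ht => by
        have ht : (0:ℝ) < t := ht
        have htt : t * t ^ (-(1/2):ℝ) = t ^ ((1/2):ℝ) := by
          nth_rewrite 1 [← Real.rpow_one t]
          rw [← Real.rpow_add ht]
          norm_num
        simp only [hF'def, ← htt]
        ring)]
    rw [MeasureTheory.integral_const_mul, gauss_int _ (by norm_num),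
      show (((1:ℝ)/2)+1)/2 = 3/4 by norm_num]
    ring
  rw [hI'] at hderiv
  -- derivative of the prefactor
  have h0 : HasDerivAt (fun x : ℝ => Real.exp (-x^2/2) * π ^ (-(1/2):ℝ)) 0 0 := by
    have hq : HasDerivAt (fun x : ℝ => -x^2/2) 0 0 := by
      simpa using ((hasDerivAt_pow 2 (0:ℝ)).neg.div_const 2)
    simpa using (hq.exp).mul_const (π ^ (-(1/2):ℝ))
  have hv : HasDerivAt vFun
      (0 * (∫ t in Ioi (0:ℝ), F 0 t)
        + (Real.exp (-(0:ℝ)^2/2) * π ^ (-(1/2):ℝ)) * (-Real.Gamma (3/4))) 0 :=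
    h0.mul hderiv
  rw [hv.deriv]
  rw [show -(0:ℝ)^2/2 = 0 by norm_num, Real.exp_zero, one_mul, hrpow, zero_mul, zero_add]
  rw [Real.sqrt_mul (by norm_num : (0:ℝ) ≤ 2)]
  rw [eq_div_iff hG14.ne']
  field_simp
  linear_combination -hprod + Real.sqrt 2 * hπ
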